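/- In the k-bonacci word, the n-th occurrence of the letter j lies inside the n-th block of the factorization ω = θ^{j+1}(ω_1)θ^{j+1}(ω_2)θ^{j+1}(ω_3)⋯, at distance 2^j from the start of that block; equivalently, X^j_n = 2^j + Σ_{m<n} |θ^{j+1}(ω_m)|. -/

import Mathlib

/-- The k-bonacci substitution on the alphabet {0,…,k−1}. -/
def subW (k : ℕ) (w : List ℕ) : List ℕ :=
  w.flatMap (fun j => if j + 1 < k then [0, j + 1] else [0])

/-- The k-bonacci word (0-indexed: `kbonacci k (m-1)` is the letter ω_m). -/
def kbonacci (k n : ℕ) : ℕ := ((subW k)^[n + 1] [0]).getD n 0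

/-- X^j_n: the 1-based position of the n-th (1-based) occurrence of letter j. -/
noncomputable def Xpos (k j n : ℕ) : ℕ :=
  Nat.nth (fun m => kbonacci k m = j) (n - 1) + 1

section KB
variable {k : ℕ}

lemma subW_single (a : ℕ) : subW k [a] = if a + 1 < k then [0, a+1] else [0] := by
  simp [subW, List.flatMap]

lemma subW_append (u v : List ℕ) : subW k (u ++ v) = subW k u ++ subW k v :=
  List.flatMap_append

lemma subW_cons (a : ℕ) (t : List ℕ) :
    subW k (a :: t) = (if a + 1 < k then [0, a+1] else [0]) ++ subW k t := by
  simp [subW, List.flatMap_cons]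

lemma iter_append (r : ℕ) (u v : List ℕ) :
    (subW k)^[r] (u ++ v) = (subW k)^[r] u ++ (subW k)^[r] v := by
  induction r generalizing u v with
  | zero => simp
  | succ r ih =>
    rw [Function.iterate_succ_apply, Function.iterate_succ_apply,
      Function.iterate_succ_apply, subW_append, ih]

lemma iter_prefix (r : ℕ) {u v : List ℕ} (h : u <+: v) :
    (subW k)^[r] u <+: (subW k)^[r] v := by
  obtain ⟨t, rfl⟩ := h
  rw [iter_append]
  exact List.prefix_append _ _

lemma iter_len_pos (r a : ℕ) : 0 < ((subW k)^[r] [a]).length := by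
  induction r generalizing a with
  | zero => simp
  | succ r ih =>
    rw [Function.iterate_succ_apply]
    have hs : subW k [a] = if a + 1 < k then [0, a+1] else [0] := subW_single a
    rw [hs]
    split
    · have : ([0, a+1] : List ℕ) = [0] ++ [a+1] := rfl
      rw [this, iter_append, List.length_append]
      have := ih 0
      omega
    · exact ih 0

variable (hk : 2 ≤ k)
include hk

lemma pre_succ (M : ℕ) :
    (subW k)^[M+1] [0] = (subW k)^[M] [0] ++ (subW k)^[M] [1] := by
  rw [Function.iterate_succ_apply]
  have h1 : subW k [0] = [0] ++ [1] := by
    simp [subW, List.flatMap]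
    omega
  rw [h1, iter_append]

lemma pre_prefix {M M' : ℕ} (h : M ≤ M') :
    (subW k)^[M] [0] <+: (subW k)^[M'] [0] := by
  induction M' with
  | zero => simp_all
  | succ M' ih =>
    rcases Nat.lt_or_ge M (M'+1) with h' | h'
    · exact (ih (by omega)).trans (by rw [pre_succ hk]; exact List.prefix_append _ _)
    · have : M = M' + 1 := by omega
      subst this; exact List.prefix_rfl

lemma pre_length (M : ℕ) : M + 1 ≤ ((subW k)^[M] [0]).length := by
  induction M with
  | zero => simp
  | succ M ih =>
    rw [pre_succ hk, List.length_append]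
    have := iter_len_pos (k := k) M 1
    omega

omit hk

lemma getD_of_prefix {u v : List ℕ} (h : u <+: v) {m : ℕ} (hm : m < u.length) :
    v.getD m 0 = u.getD m 0 := by
  have hv : m < v.length := lt_of_lt_of_le hm h.length_le
  rw [List.getD_eq_getElem _ _ hm, List.getD_eq_getElem _ _ hv, h.getElem hm]

include hk

lemma kbonacci_eq {M m : ℕ} (hm : m < ((subW k)^[M] [0]).length) :
    kbonacci k m = ((subW k)^[M] [0]).getD m 0 := by
  unfold kbonacci
  rcases Nat.le_total (m+1) M with h | h
  · rw [getD_of_prefix (pre_prefix hk h) (lt_of_lt_of_le (by omega) (pre_length hk (m+1)))]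
  · rw [getD_of_prefix (pre_prefix hk h) hm]

omit hk

lemma subW_mem {c : ℕ} {w : List ℕ} (h : c ∈ subW k w) : c = 0 ∨ ∃ b ∈ w, c = b + 1 := by
  simp only [subW, List.mem_flatMap] at h
  obtain ⟨b, hb, hc⟩ := h
  split at hc
  · simp at hc
    rcases hc with h | h
    · exact Or.inl h
    · exact Or.inr ⟨b, hb, h⟩
  · simp at hc; exact Or.inl hc

lemma subW_len_two {w : List ℕ} (h : ∀ b ∈ w, b + 1 < k) :
    (subW k w).length = 2 * w.length := by
  induction w with
  | nil => simp [subW]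
  | cons a t ih =>
    rw [subW_cons, if_pos (h a (by simp)), List.length_append,
      ih (fun b hb => h b (by simp [hb]))]
    simp; omega

lemma blockStruct (hk : 2 ≤ k) : ∀ j, j < k → ∀ a : ℕ, ∃ P S : List ℕ,
    (subW k)^[j+1] [a] = P ++ j :: S ∧ P.length = 2^j - 1 ∧
    (∀ b ∈ P, b < j) ∧ (∀ b ∈ S, b ≠ j) := by
  intro j
  induction j with
  | zero =>
    intro _ a
    by_cases h : a + 1 < k
    · exact ⟨[], [a+1], by simp [subW_single, h], rfl, by simp, by simp⟩
    · exact ⟨[], [], by simp [subW_single, h], rfl, by simp, by simp⟩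
  | succ j ih =>
    intro hjk a
    obtain ⟨P, S, hPS, hlen, hP, hS⟩ := ih (by omega) a
    have hstep : (subW k)^[j+2] [a] = subW k ((subW k)^[j+1] [a]) :=
      Function.iterate_succ_apply' (subW k) (j+1) [a]
    have hP1 : ∀ b ∈ P, b + 1 < k := fun b hb => by have := hP b hb; omega
    refine ⟨subW k P ++ [0], subW k S, ?_, ?_, ?_, ?_⟩
    · rw [hstep, hPS]
      have : P ++ j :: S = P ++ [j] ++ S := by simp
      rw [this, subW_append, subW_append, subW_single, if_pos hjk]
      simp
    · rw [List.length_append, subW_len_two hP1, hlen]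
      have h1 : 1 ≤ 2^j := Nat.one_le_two_pow
      have h2 : 2^(j+1) = 2 * 2^j := by ring
      simp; omega
    · intro b hb
      rcases List.mem_append.mp hb with hb | hb
      · rcases subW_mem hb with h | ⟨c, hc, rfl⟩
        · omega
        · have := hP c hc; omega
      · simp at hb; omega
    · intro b hb
      rcases subW_mem hb with h | ⟨c, hc, rfl⟩
      · omega
      · have := hS c hc; omega

lemma count_block (hk : 2 ≤ k) {j : ℕ} (hjk : j < k) (a : ℕ) :
    ((subW k)^[j+1] [a]).count j = 1 := by
  obtain ⟨P, S, hPS, _, hP, hS⟩ := blockStruct hk j hjk a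
  rw [hPS, List.count_append, List.count_eq_zero.mpr (fun h => by have := hP j h; omega)]
  simp [List.count_cons, List.count_eq_zero.mpr (fun h => (hS j h) rfl)]

lemma iter_nil (r : ℕ) : (subW k)^[r] [] = [] := by
  induction r with
  | zero => rfl
  | succ r ih => rw [Function.iterate_succ_apply]; simpa [subW]

lemma count_blocks (hk : 2 ≤ k) {j : ℕ} (hjk : j < k) (t : List ℕ) :
    ((subW k)^[j+1] t).count j = t.length := by
  induction t with
  | nil => simp [iter_nil]
  | cons a s ih =>
    have : a :: s = [a] ++ s := rfl
    rw [this, iter_append, List.count_append, count_block hk hjk, ih]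
    simp [Nat.add_comm]

lemma len_sum (r : ℕ) (t : List ℕ) :
    ((subW k)^[r] t).length
      = ∑ m ∈ Finset.range t.length, ((subW k)^[r] [t.getD m 0]).length := by
  induction t with
  | nil => simp [iter_nil]
  | cons a s ih =>
    have h : (subW k)^[r] (a :: s) = (subW k)^[r] [a] ++ (subW k)^[r] s := by
      have h0 : a :: s = [a] ++ s := rfl
      rw [h0, iter_append]
    rw [h, List.length_append, ih, List.length_cons, Finset.sum_range_succ']
    simp [List.getD_cons_succ, List.getD_cons_zero, Nat.add_comm]

lemma list_count_eq (l : List ℕ) (j : ℕ) :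
    l.count j = ∑ m ∈ Finset.range l.length, if l.getD m 0 = j then 1 else 0 := by
  induction l with
  | nil => simp
  | cons a t ih =>
    rw [List.length_cons, Finset.sum_range_succ']
    simp only [List.getD_cons_succ, List.getD_cons_zero, List.count_cons, ih]
    congr 1
    simp [beq_iff_eq]

lemma nth_eq (hk : 2 ≤ k) {j : ℕ} (hjk : j < k) (i : ℕ) :
    Nat.nth (fun m => kbonacci k m = j) i
      = 2 ^ j - 1 + ∑ m ∈ Finset.range i, ((subW k)^[j+1] [kbonacci k m]).length := by
  set p : ℕ → Prop := fun m => kbonacci k m = j with hp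
  set B : ℕ := ∑ m ∈ Finset.range i, ((subW k)^[j+1] [kbonacci k m]).length with hB
  set M : ℕ := i + 1 with hM
  have hprelen : i + 2 ≤ ((subW k)^[M] [0]).length := pre_length hk M
  set t1 : List ℕ := ((subW k)^[M] [0]).take i with ht1
  have ht1len : t1.length = i := by
    rw [ht1, List.length_take]; omega
  have hgetD : ∀ m < i, t1.getD m 0 = kbonacci k m := by
    intro m hm
    rw [kbonacci_eq hk (M := M) (by omega),
      getD_of_prefix (List.take_prefix _ _) (by omega : m < t1.length)]
  have htake : ((subW k)^[M] [0]).take (i+1) = t1 ++ [kbonacci k i] := by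
    rw [List.take_succ]
    congr 1
    rw [List.getElem?_eq_getElem (by omega)]
    have : kbonacci k i = ((subW k)^[M] [0]).getD i 0 := kbonacci_eq hk (by omega)
    rw [this, List.getD_eq_getElem _ _ (by omega)]
    rfl
  obtain ⟨P, S, hPS, hPlen, hPlt, hS⟩ := blockStruct hk j hjk (kbonacci k i)
  set l : List ℕ := (subW k)^[j+1] t1 ++ P with hl
  have hpre : l ++ j :: S <+: (subW k)^[(j+1) + M] [0] := by
    have h1 : (subW k)^[j+1] (((subW k)^[M] [0]).take (i+1))
        <+: (subW k)^[j+1] ((subW k)^[M] [0]) :=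
      iter_prefix _ (List.take_prefix _ _)
    rw [htake, iter_append, hPS,
      (Function.iterate_add_apply (subW k) (j+1) M [0]).symm] at h1
    rw [hl, List.append_assoc]
    exact h1
  have hpre2 : l ++ [j] <+: (subW k)^[(j+1) + M] [0] := by
    refine List.IsPrefix.trans ?_ hpre
    refine ⟨S, ?_⟩
    simp
  have hlenl : l.length = B + (2 ^ j - 1) := by
    rw [hl, List.length_append, hPlen, len_sum, ht1len]
    congr 1
    refine Finset.sum_congr rfl fun m hm => ?_
    rw [hgetD m (Finset.mem_range.mp hm)]
  have hlj : (l ++ [j]).length = l.length + 1 := by simp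
  have hml : ∀ m < l.length, kbonacci k m = l.getD m 0 := by
    intro m hm
    rw [kbonacci_eq hk (lt_of_lt_of_le (by omega) hpre2.length_le),
      getD_of_prefix hpre2 (by omega),
      getD_of_prefix (List.prefix_append _ _) hm]
  have hpj : p l.length := by
    show kbonacci k l.length = j
    rw [kbonacci_eq hk (lt_of_lt_of_le (by omega) hpre2.length_le),
      getD_of_prefix hpre2 (by omega),
      List.getD_eq_getElem _ _ (by simp)]
    simp
  have hcnt : Nat.count p l.length = i := by
    rw [Nat.count_eq_card_filter_range, Finset.card_filter]
    have hcong : ∀ m ∈ Finset.range l.length,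
        (if p m then 1 else 0) = if l.getD m 0 = j then 1 else 0 := by
      intro m hm
      have h := hml m (Finset.mem_range.mp hm)
      by_cases hc : p m
      · rw [if_pos hc, if_pos (by rw [← h]; exact hc)]
      · rw [if_neg hc, if_neg (fun hx => hc (by show kbonacci k m = j; rw [h]; exact hx))]
    rw [Finset.sum_congr rfl hcong, ← list_count_eq]
    rw [hl, List.count_append, count_blocks hk hjk, ht1len,
      List.count_eq_zero.mpr (fun h => by have := hPlt j h; omega)]
    omega
  have hnth := Nat.nth_count (p := p) hpj
  rw [hcnt] at hnth
  rw [hnth, hlenl]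
  omega

end KB

/-- In the factorization ω = θ^{j+1}(ω_1)θ^{j+1}(ω_2)⋯, the n-th occurrence of the
letter j lies in the n-th block at distance 2^j from its start:
X^j_n = 2^j + Σ_{m<n} |θ^{j+1}(ω_m)|. -/
theorem position_in_block (k j : ℕ) (hk : 2 ≤ k) (hj : j ≤ k - 1)
    (n : ℕ) (hn : 1 ≤ n) :
    Xpos k j n = 2 ^ j +
      ∑ m ∈ Finset.range (n - 1), ((subW k)^[j + 1] [kbonacci k m]).length := by
  have hjk : j < k := by omega
  rw [Xpos, nth_eq hk hjk]
  have : 1 ≤ 2 ^ j := Nat.one_le_two_pow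
  omega
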